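/- There exist constants C,c>0 such that for every N≥1, every m∈{0,…,N} and every M>0, P^{N,0,m}( max_{0≤j≤N} |L(j) − mj/N| ≤ M ) ≥ 1 − C·exp(−cM²/N). -/

import Mathlib

/-- A Bernoulli path on `{0,…,N}`: increments in `{0,1}`. -/
def IsBPath (N : ℕ) (L : Fin (N+1) → ℤ) : Prop :=
  ∀ j : Fin N, L j.succ = L j.castSucc ∨ L j.succ = L j.castSucc + 1

/-- `Ω(N,x,y)`: Bernoulli paths from `x` to `y`. -/
def pathSet (N : ℕ) (x y : ℤ) : Set (Fin (N+1) → ℤ) :=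
  {L | IsBPath N L ∧ L 0 = x ∧ L (Fin.last N) = y}

/-- Probability of the event `A` under the uniform measure on the finite set `Ω`. -/
noncomputable def unifProb {X : Type*} (Ω A : Set X) : ℝ :=
  ((Ω ∩ A).ncard : ℝ) / (Ω.ncard : ℝ)


open Finset

namespace BPaux

/-- sample space: subsets of `range N` of size `m` -/
def Om (N m : ℕ) : Finset (Finset ℕ) := (Finset.range N).powersetCard m

/-- path value at time `t` -/
def Lc (t : ℕ) (S : Finset ℕ) : ℕ := (S ∩ Finset.range t).card

/-- centered deviation -/
noncomputable def Dev (N m t : ℕ) (S : Finset ℕ) : ℝ := (Lc t S : ℝ) - t * m / N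

/-- normalized martingale -/
noncomputable def Zp (N m t : ℕ) (S : Finset ℕ) : ℝ := Dev N m t S / ((N : ℝ) - t)

lemma mem_Om {N m : ℕ} {S : Finset ℕ} : S ∈ Om N m ↔ S ⊆ Finset.range N ∧ S.card = m := by
  simp [Om, Finset.mem_powersetCard]

lemma Lc_succ (t : ℕ) (S : Finset ℕ) :
    Lc (t+1) S = Lc t S + (if t ∈ S then 1 else 0) := by
  classical
  unfold Lc
  by_cases h : t ∈ S
  · rw [Finset.range_add_one, Finset.inter_insert_of_mem h,
      Finset.card_insert_of_notMem (by simp), if_pos h]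
  · rw [Finset.range_add_one, Finset.inter_insert_of_notMem h, if_neg h, Nat.add_zero]

lemma Lc_le_card (t : ℕ) (S : Finset ℕ) : Lc t S ≤ S.card :=
  Finset.card_le_card Finset.inter_subset_left

lemma Lc_le (t : ℕ) (S : Finset ℕ) : Lc t S ≤ t := by
  have := Finset.card_le_card (Finset.inter_subset_right (s₁ := S) (s₂ := Finset.range t))
  simpa [Lc] using this

lemma Lc_prefix {t u : ℕ} (hu : u ≤ t) {S T : Finset ℕ}
    (h : S ∩ Finset.range t = T ∩ Finset.range t) : Lc u S = Lc u T := by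
  unfold Lc
  have hr : Finset.range t ∩ Finset.range u = Finset.range u :=
    Finset.inter_eq_right.mpr (Finset.range_subset_range.mpr hu)
  have h1 : S ∩ Finset.range u = (S ∩ Finset.range t) ∩ Finset.range u := by
    rw [Finset.inter_assoc, hr]
  have h2 : T ∩ Finset.range u = (T ∩ Finset.range t) ∩ Finset.range u := by
    rw [Finset.inter_assoc, hr]
  rw [h1, h2, h]

lemma Lc_full {N m : ℕ} {S : Finset ℕ} (hS : S ∈ Om N m) : Lc N S = m := by
  obtain ⟨h1, h2⟩ := mem_Om.mp hS
  unfold Lc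
  rw [Finset.inter_eq_left.mpr h1, h2]


section Fiber

variable {N m t : ℕ} {P : Finset ℕ}

lemma card_fiber_not (ht : t < N) (hP : P ⊆ Finset.range t) (hk : P.card ≤ m) :
    ((Om N m).filter (fun S => S ∩ Finset.range t = P ∧ t ∉ S)).card
      = (N - t - 1).choose (m - P.card) := by
  classical
  have hcard : ((Finset.Ico (t+1) N).powersetCard (m - P.card)).card
      = (N - t - 1).choose (m - P.card) := by
    rw [Finset.card_powersetCard, Nat.card_Ico]
    congr 1 <;> omega
  rw [← hcard]
  apply Finset.card_bij' (i := fun S _ => S \ Finset.range (t+1))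
    (j := fun T _ => P ∪ T)
  · intro S hS
    simp only [Finset.mem_filter, mem_Om] at hS
    obtain ⟨⟨hsub, hcardS⟩, hpre, htS⟩ := hS
    rw [Finset.mem_powersetCard]
    constructor
    · intro x hx
      simp only [Finset.mem_sdiff, Finset.mem_range, not_lt] at hx
      rw [Finset.mem_Ico]
      exact ⟨hx.2, Finset.mem_range.mp (hsub hx.1)⟩
    · have h1 : S ∩ Finset.range (t+1) = P := by
        rw [Finset.range_add_one, Finset.inter_insert_of_notMem htS, hpre]
      have h2 := Finset.card_inter_add_card_sdiff S (Finset.range (t+1))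
      rw [h1, hcardS] at h2
      omega
  · intro T hT
    rw [Finset.mem_powersetCard] at hT
    obtain ⟨hTsub, hTcard⟩ := hT
    have hdisj : Disjoint P T := by
      rw [Finset.disjoint_left]
      intro x hxP hxT
      have h1 := Finset.mem_range.mp (hP hxP)
      have h2 := (Finset.mem_Ico.mp (hTsub hxT)).1
      omega
    simp only [Finset.mem_filter, mem_Om]
    refine ⟨⟨?_, ?_⟩, ?_, ?_⟩
    · intro x hx
      rcases Finset.mem_union.mp hx with h | h
      · exact Finset.mem_range.mpr (lt_trans (Finset.mem_range.mp (hP h)) ht)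
      · exact Finset.mem_range.mpr (Finset.mem_Ico.mp (hTsub h)).2
    · rw [Finset.card_union_of_disjoint hdisj, hTcard]; omega
    · ext x
      simp only [Finset.mem_inter, Finset.mem_union, Finset.mem_range]
      constructor
      · rintro ⟨h | h, hx⟩
        · exact h
        · exact absurd ((Finset.mem_Ico.mp (hTsub h)).1) (by omega)
      · intro h
        exact ⟨Or.inl h, Finset.mem_range.mp (hP h)⟩
    · intro hx
      rcases Finset.mem_union.mp hx with h | h
      · exact absurd (Finset.mem_range.mp (hP h)) (by omega)
      · have := (Finset.mem_Ico.mp (hTsub h)).1; omega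
  · intro S hS
    simp only [Finset.mem_filter, mem_Om] at hS
    obtain ⟨⟨hsub, hcardS⟩, hpre, htS⟩ := hS
    ext x
    simp only [Finset.mem_union, Finset.mem_sdiff, Finset.mem_range, not_lt]
    constructor
    · rintro (h | h)
      · have hx : x ∈ S ∩ Finset.range t := by rw [hpre]; exact h
        exact (Finset.mem_inter.mp hx).1
      · exact h.1
    · intro hxS
      by_cases hlt : x < t + 1
      · left
        have hxt : x < t := by
          rcases Nat.lt_succ_iff_lt_or_eq.mp hlt with h | h
          · exact h
          · exact absurd (h ▸ hxS) htS
        rw [← hpre]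
        exact Finset.mem_inter.mpr ⟨hxS, Finset.mem_range.mpr hxt⟩
      · right; exact ⟨hxS, by omega⟩
  · intro T hT
    rw [Finset.mem_powersetCard] at hT
    obtain ⟨hTsub, hTcard⟩ := hT
    ext x
    simp only [Finset.mem_sdiff, Finset.mem_union, Finset.mem_range, not_lt]
    constructor
    · rintro ⟨h | h, hx⟩
      · exact absurd (Finset.mem_range.mp (hP h)) (by omega)
      · exact h
    · intro hxT
      have := Finset.mem_Ico.mp (hTsub hxT)
      exact ⟨Or.inr hxT, by omega⟩

lemma card_fiber_mem (ht : t < N) (hP : P ⊆ Finset.range t) (hk : P.card < m) :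
    ((Om N m).filter (fun S => S ∩ Finset.range t = P ∧ t ∈ S)).card
      = (N - t - 1).choose (m - P.card - 1) := by
  classical
  have htP : t ∉ P := fun h => absurd (Finset.mem_range.mp (hP h)) (lt_irrefl t)
  have hcard : ((Finset.Ico (t+1) N).powersetCard (m - P.card - 1)).card
      = (N - t - 1).choose (m - P.card - 1) := by
    rw [Finset.card_powersetCard, Nat.card_Ico]
    congr 1 <;> omega
  rw [← hcard]
  apply Finset.card_bij' (i := fun S _ => S \ Finset.range (t+1))
    (j := fun T _ => insert t (P ∪ T))
  · intro S hS
    simp only [Finset.mem_filter, mem_Om] at hS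
    obtain ⟨⟨hsub, hcardS⟩, hpre, htS⟩ := hS
    rw [Finset.mem_powersetCard]
    constructor
    · intro x hx
      simp only [Finset.mem_sdiff, Finset.mem_range, not_lt] at hx
      rw [Finset.mem_Ico]
      exact ⟨hx.2, Finset.mem_range.mp (hsub hx.1)⟩
    · have h1 : S ∩ Finset.range (t+1) = insert t P := by
        rw [Finset.range_add_one, Finset.inter_insert_of_mem htS, hpre]
      have h2 := Finset.card_inter_add_card_sdiff S (Finset.range (t+1))
      rw [h1, hcardS, Finset.card_insert_of_notMem htP] at h2
      omega
  · intro T hT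
    rw [Finset.mem_powersetCard] at hT
    obtain ⟨hTsub, hTcard⟩ := hT
    have hdisj : Disjoint P T := by
      rw [Finset.disjoint_left]
      intro x hxP hxT
      have h1 := Finset.mem_range.mp (hP hxP)
      have h2 := (Finset.mem_Ico.mp (hTsub hxT)).1
      omega
    have htPT : t ∉ P ∪ T := by
      intro h
      rcases Finset.mem_union.mp h with h | h
      · exact htP h
      · exact absurd (Finset.mem_Ico.mp (hTsub h)).1 (by omega)
    simp only [Finset.mem_filter, mem_Om]
    refine ⟨⟨?_, ?_⟩, ?_, ?_⟩
    · intro x hx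
      rcases Finset.mem_insert.mp hx with h | h
      · exact Finset.mem_range.mpr (h ▸ ht)
      · rcases Finset.mem_union.mp h with h | h
        · exact Finset.mem_range.mpr (lt_trans (Finset.mem_range.mp (hP h)) ht)
        · exact Finset.mem_range.mpr (Finset.mem_Ico.mp (hTsub h)).2
    · rw [Finset.card_insert_of_notMem htPT, Finset.card_union_of_disjoint hdisj, hTcard]
      omega
    · ext x
      simp only [Finset.mem_inter, Finset.mem_insert, Finset.mem_union, Finset.mem_range]
      constructor
      · rintro ⟨h | h | h, hx⟩
        · omega
        · exact h
        · exact absurd ((Finset.mem_Ico.mp (hTsub h)).1) (by omega)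
      · intro h
        exact ⟨Or.inr (Or.inl h), Finset.mem_range.mp (hP h)⟩
    · exact Finset.mem_insert_self t _
  · intro S hS
    simp only [Finset.mem_filter, mem_Om] at hS
    obtain ⟨⟨hsub, hcardS⟩, hpre, htS⟩ := hS
    ext x
    simp only [Finset.mem_insert, Finset.mem_union, Finset.mem_sdiff, Finset.mem_range, not_lt]
    constructor
    · rintro (h | h | h)
      · exact h ▸ htS
      · have hx : x ∈ S ∩ Finset.range t := by rw [hpre]; exact h
        exact (Finset.mem_inter.mp hx).1
      · exact h.1
    · intro hxS
      by_cases hlt : x < t + 1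
      · rcases Nat.lt_succ_iff_lt_or_eq.mp hlt with h | h
        · right; left
          rw [← hpre]
          exact Finset.mem_inter.mpr ⟨hxS, Finset.mem_range.mpr h⟩
        · left; exact h
      · right; right; exact ⟨hxS, by omega⟩
  · intro T hT
    rw [Finset.mem_powersetCard] at hT
    obtain ⟨hTsub, hTcard⟩ := hT
    ext x
    simp only [Finset.mem_sdiff, Finset.mem_insert, Finset.mem_union, Finset.mem_range, not_lt]
    constructor
    · rintro ⟨h | h | h, hx⟩
      · omega
      · exact absurd (Finset.mem_range.mp (hP h)) (by omega)
      · exact h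
    · intro hxT
      have := Finset.mem_Ico.mp (hTsub hxT)
      exact ⟨Or.inr (Or.inr hxT), by omega⟩

lemma fiber_mem_empty (hk : m ≤ P.card) :
    ((Om N m).filter (fun S => S ∩ Finset.range t = P ∧ t ∈ S)) = ∅ := by
  classical
  rw [Finset.filter_eq_empty_iff]
  rintro S hS ⟨hpre, htS⟩
  have hcardS := (mem_Om.mp hS).2
  have hPS : P ⊆ S := hpre ▸ Finset.inter_subset_left
  have htP : t ∉ P := by
    intro h
    have := Finset.mem_range.mp (Finset.mem_inter.mp (hpre ▸ h)).2
    exact lt_irrefl t this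
  have : P.card + 1 ≤ S.card := by
    have hins : insert t P ⊆ S := Finset.insert_subset htS hPS
    have := Finset.card_le_card hins
    rw [Finset.card_insert_of_notMem htP] at this
    omega
  omega

end Fiber


section RealLemmas

lemma exp_le_one_add_add_sq {w : ℝ} (hw : |w| ≤ 1) : Real.exp w ≤ 1 + w + w^2 := by
  have h := Real.exp_bound hw (n := 2) (by norm_num)
  have hsum : ∑ i ∈ Finset.range 2, w ^ i / (i.factorial : ℝ) = 1 + w := by
    simp [Finset.sum_range_succ]
  rw [hsum] at h
  have h2 : Real.exp w - (1 + w) ≤ |w|^2 * (((2:ℕ).succ : ℝ) / (((2:ℕ).factorial : ℝ) * 2)) :=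
    le_trans (le_abs_self _) h
  have h3 : (((2:ℕ).succ : ℝ) / (((2:ℕ).factorial : ℝ) * 2)) = 3/4 := by norm_num [Nat.factorial]
  rw [h3, sq_abs] at h2
  nlinarith [sq_nonneg w]

lemma two_point_ge {a b x y z lam : ℝ} (ha : 0 ≤ a) (hb : 0 ≤ b)
    (hz : (a + b) * z = a * x + b * y) :
    (a + b) * Real.exp (lam * z) ≤ a * Real.exp (lam * x) + b * Real.exp (lam * y) := by
  rcases eq_or_lt_of_le (add_nonneg ha hb) with h0 | hpos
  · have ha0 : a = 0 := by linarith
    have hb0 : b = 0 := by linarith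
    simp [ha0, hb0]
  · have key := convexOn_exp.2 (Set.mem_univ (lam * x)) (Set.mem_univ (lam * y))
      (div_nonneg ha hpos.le) (div_nonneg hb hpos.le)
      (by field_simp)
    have harg : a / (a + b) * (lam * x) + b / (a + b) * (lam * y) = lam * z := by
      rw [div_mul_eq_mul_div, div_mul_eq_mul_div, ← add_div, div_eq_iff (ne_of_gt hpos)]
      linear_combination (-lam) * hz
    rw [smul_eq_mul, smul_eq_mul, smul_eq_mul, smul_eq_mul, harg] at key
    calc (a + b) * Real.exp (lam * z)
        ≤ (a + b) * (a / (a + b) * Real.exp (lam * x) + b / (a + b) * Real.exp (lam * y)) :=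
          mul_le_mul_of_nonneg_left key hpos.le
      _ = a * Real.exp (lam * x) + b * Real.exp (lam * y) := by field_simp

lemma two_point_core {a b u v g lam A B : ℝ}
    (e1 : a * A ≤ a * (1 + lam * u + (lam * u)^2))
    (e2 : b * B ≤ b * (1 + lam * v + (lam * v)^2))
    (e3 : a * (lam^2 * u^2) ≤ a * (lam^2 * g^2))
    (e4 : b * (lam^2 * v^2) ≤ b * (lam^2 * g^2))
    (huv2 : a * (lam * u) + b * (lam * v) = 0) :
    a * A + b * B ≤ (a + b) * (1 + lam^2 * g^2) := by
  nlinarith [e1, e2, e3, e4, huv2]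

lemma two_point_le {a b x y z g lam : ℝ} (ha : 0 ≤ a) (hb : 0 ≤ b)
    (hz : (a + b) * z = a * x + b * y) (hxy : x = y + g) (hg : 0 ≤ g)
    (hlam : |lam| * g ≤ 1) :
    a * Real.exp (lam * x) + b * Real.exp (lam * y)
      ≤ (1 + lam^2 * g^2) * ((a + b) * Real.exp (lam * z)) := by
  rcases eq_or_lt_of_le (add_nonneg ha hb) with h0 | hpos
  · have ha0 : a = 0 := by linarith
    have hb0 : b = 0 := by linarith
    simp [ha0, hb0]
  · set u := x - z with hu
    set v := y - z with hv
    have huv : a * u + b * v = 0 := by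
      simp only [hu, hv]; linear_combination -hz
    have h1 : u - v = g := by simp only [hu, hv, hxy]; ring
    have hu2 : (a + b) * u = b * g := by linear_combination huv + b * h1
    have hv2 : (a + b) * v = -(a * g) := by linear_combination huv - a * h1
    have hug : |u| ≤ g := by
      rw [abs_le]; constructor <;> nlinarith
    have hvg : |v| ≤ g := by
      rw [abs_le]; constructor <;> nlinarith
    have hlamu : |lam * u| ≤ 1 := by
      rw [abs_mul]
      calc |lam| * |u| ≤ |lam| * g := mul_le_mul_of_nonneg_left hug (abs_nonneg _)
        _ ≤ 1 := hlam
    have hlamv : |lam * v| ≤ 1 := by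
      rw [abs_mul]
      calc |lam| * |v| ≤ |lam| * g := mul_le_mul_of_nonneg_left hvg (abs_nonneg _)
        _ ≤ 1 := hlam
    have hexpu := exp_le_one_add_add_sq hlamu
    have hexpv := exp_le_one_add_add_sq hlamv
    have husq : u^2 ≤ g^2 := by nlinarith [abs_nonneg u, sq_abs u]
    have hvsq : v^2 ≤ g^2 := by nlinarith [abs_nonneg v, sq_abs v]
    have hx' : Real.exp (lam * x) = Real.exp (lam * z) * Real.exp (lam * u) := by
      rw [← Real.exp_add]; congr 1; simp only [hu]; ring
    have hy' : Real.exp (lam * y) = Real.exp (lam * z) * Real.exp (lam * v) := by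
      rw [← Real.exp_add]; congr 1; simp only [hv]; ring
    have inner : a * Real.exp (lam * u) + b * Real.exp (lam * v)
        ≤ (a + b) * (1 + lam^2 * g^2) := by
      have e1 : a * Real.exp (lam * u) ≤ a * (1 + lam * u + (lam * u)^2) :=
        mul_le_mul_of_nonneg_left hexpu ha
      have e2 : b * Real.exp (lam * v) ≤ b * (1 + lam * v + (lam * v)^2) :=
        mul_le_mul_of_nonneg_left hexpv hb
      have e3 : a * (lam^2 * u^2) ≤ a * (lam^2 * g^2) :=
        mul_le_mul_of_nonneg_left (mul_le_mul_of_nonneg_left husq (sq_nonneg lam)) ha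
      have e4 : b * (lam^2 * v^2) ≤ b * (lam^2 * g^2) :=
        mul_le_mul_of_nonneg_left (mul_le_mul_of_nonneg_left hvsq (sq_nonneg lam)) hb
      have huv2 : a * (lam * u) + b * (lam * v) = 0 := by linear_combination lam * huv
      exact two_point_core e1 e2 e3 e4 huv2
    calc a * Real.exp (lam * x) + b * Real.exp (lam * y)
        = Real.exp (lam * z) * (a * Real.exp (lam * u) + b * Real.exp (lam * v)) := by
          rw [hx', hy']; ring
      _ ≤ Real.exp (lam * z) * ((a + b) * (1 + lam^2 * g^2)) :=
          mul_le_mul_of_nonneg_left inner (Real.exp_pos _).le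
      _ = (1 + lam^2 * g^2) * ((a + b) * Real.exp (lam * z)) := by ring

lemma mean_eq {a b k t m N : ℝ} (h1 : 0 < N - t) (h2 : 0 < N - t - 1) (hN : 0 < N)
    (hI : a * (N - t) = (a + b) * (m - k)) :
    (a + b) * ((k - t * m / N) / (N - t))
      = a * ((k + 1 - (t + 1) * m / N) / (N - t - 1))
        + b * ((k - (t + 1) * m / N) / (N - t - 1)) := by
  have e1 : N - t ≠ 0 := ne_of_gt h1
  have e2 : N - t - 1 ≠ 0 := ne_of_gt h2
  have e3 : N ≠ 0 := ne_of_gt hN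
  field_simp
  ring_nf
  linear_combination (-N) * hI

end RealLemmas


section Step

variable {N m t : ℕ} {lam : ℝ} {P : Finset ℕ}

lemma fiber_identity (ht : t < N) (hP : P ⊆ Finset.range t) (hk : P.card ≤ m) :
    (((Om N m).filter (fun S => S ∩ Finset.range t = P ∧ t ∈ S)).card : ℝ) * ((N:ℝ) - t)
      = ((((Om N m).filter (fun S => S ∩ Finset.range t = P ∧ t ∈ S)).card : ℝ)
          + (((Om N m).filter (fun S => S ∩ Finset.range t = P ∧ t ∉ S)).card : ℝ))
        * ((m:ℝ) - P.card) := by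
  classical
  rcases eq_or_lt_of_le hk with he | hlt
  · rw [fiber_mem_empty he.ge]
    simp [he]
  · rw [card_fiber_mem ht hP hlt, card_fiber_not ht hP hk]
    have h1 : (N - t - 1) + 1 = N - t := by omega
    have h2 : (m - P.card - 1) + 1 = m - P.card := by omega
    have hnat : (N - t) * ((N - t - 1).choose (m - P.card - 1))
        = ((N - t - 1).choose (m - P.card - 1) + (N - t - 1).choose (m - P.card)) * (m - P.card) := by
      have key := Nat.add_one_mul_choose_eq (N - t - 1) (m - P.card - 1)
      have hp := Nat.choose_succ_succ (N - t - 1) (m - P.card - 1)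
      simp only [Nat.succ_eq_add_one] at key hp
      rw [h1, h2] at key hp
      rw [hp] at key
      exact key
    have key : (((N - t) * ((N - t - 1).choose (m - P.card - 1)) : ℕ) : ℝ)
        = ((((N - t - 1).choose (m - P.card - 1) + (N - t - 1).choose (m - P.card))
            * (m - P.card) : ℕ) : ℝ) := by exact_mod_cast congrArg (Nat.cast (R := ℝ)) hnat
    push_cast [Nat.cast_sub ht.le, Nat.cast_sub hk] at key
    linear_combination key

lemma Lc_eq_on_fiber {S : Finset ℕ} (hpre : S ∩ Finset.range t = P) : Lc t S = P.card := by
  unfold Lc; rw [hpre]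

lemma Zp_fiber_t {S : Finset ℕ} (hpre : S ∩ Finset.range t = P) :
    Zp N m t S = ((P.card : ℝ) - t * m / N) / ((N:ℝ) - t) := by
  unfold Zp Dev; rw [Lc_eq_on_fiber hpre]

lemma Zp_fiber_succ_mem {S : Finset ℕ} (hpre : S ∩ Finset.range t = P) (htS : t ∈ S) :
    Zp N m (t+1) S = (((P.card : ℝ) + 1) - ((t:ℝ)+1) * m / N) / ((N:ℝ) - t - 1) := by
  unfold Zp Dev
  rw [Lc_succ, Lc_eq_on_fiber hpre, if_pos htS]
  push_cast
  ring_nf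

lemma Zp_fiber_succ_not {S : Finset ℕ} (hpre : S ∩ Finset.range t = P) (htS : t ∉ S) :
    Zp N m (t+1) S = ((P.card : ℝ) - ((t:ℝ)+1) * m / N) / ((N:ℝ) - t - 1) := by
  unfold Zp Dev
  rw [Lc_succ, Lc_eq_on_fiber hpre, if_neg htS]
  push_cast
  ring_nf

lemma sum_fiber_split (f : Finset ℕ → ℝ) (vP vM : ℝ)
    (hfP : ∀ S ∈ Om N m, S ∩ Finset.range t = P → t ∈ S → f S = vP)
    (hfM : ∀ S ∈ Om N m, S ∩ Finset.range t = P → t ∉ S → f S = vM) :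
    ∑ S ∈ (Om N m).filter (fun S => S ∩ Finset.range t = P), f S
      = (((Om N m).filter (fun S => S ∩ Finset.range t = P ∧ t ∈ S)).card : ℝ) * vP
        + (((Om N m).filter (fun S => S ∩ Finset.range t = P ∧ t ∉ S)).card : ℝ) * vM := by
  classical
  rw [← Finset.sum_filter_add_sum_filter_not
    ((Om N m).filter (fun S => S ∩ Finset.range t = P)) (fun S => t ∈ S) f,
    Finset.filter_filter, Finset.filter_filter]
  congr 1
  · have hc : ∀ S ∈ (Om N m).filter (fun S => S ∩ Finset.range t = P ∧ t ∈ S), f S = vP := by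
      intro S hS
      simp only [Finset.mem_filter] at hS
      exact hfP S hS.1 hS.2.1 hS.2.2
    rw [Finset.sum_congr rfl hc, Finset.sum_const, nsmul_eq_mul]
  · have hc : ∀ S ∈ (Om N m).filter (fun S => S ∩ Finset.range t = P ∧ t ∉ S), f S = vM := by
      intro S hS
      simp only [Finset.mem_filter] at hS
      exact hfM S hS.1 hS.2.1 hS.2.2
    rw [Finset.sum_congr rfl hc, Finset.sum_const, nsmul_eq_mul]

lemma fiber_setup (htN : t + 2 ≤ N) :
    (0:ℝ) < (N:ℝ) ∧ (0:ℝ) < (N:ℝ) - t ∧ (0:ℝ) < (N:ℝ) - t - 1 := by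
  have h1 : ((t:ℝ)) + 2 ≤ (N:ℝ) := by exact_mod_cast htN
  refine ⟨by linarith [Nat.cast_nonneg (α := ℝ) t], by linarith, by linarith⟩

lemma fiber_step_ge (htN : t + 2 ≤ N) (hP : P ⊆ Finset.range t) (hk : P.card ≤ m) :
    ∑ S ∈ (Om N m).filter (fun S => S ∩ Finset.range t = P), Real.exp (lam * Zp N m t S)
      ≤ ∑ S ∈ (Om N m).filter (fun S => S ∩ Finset.range t = P),
          Real.exp (lam * Zp N m (t+1) S) := by
  classical
  obtain ⟨hN0, hNt, hNt1⟩ := fiber_setup (N := N) (t := t) htN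
  rw [sum_fiber_split (fun S => Real.exp (lam * Zp N m t S))
      (Real.exp (lam * (((P.card : ℝ) - t * m / N) / ((N:ℝ) - t))))
      (Real.exp (lam * (((P.card : ℝ) - t * m / N) / ((N:ℝ) - t))))
      (fun S _ hpre _ => by simp only [Zp_fiber_t hpre])
      (fun S _ hpre _ => by simp only [Zp_fiber_t hpre]),
    sum_fiber_split (fun S => Real.exp (lam * Zp N m (t+1) S))
      (Real.exp (lam * ((((P.card : ℝ) + 1) - ((t:ℝ)+1) * m / N) / ((N:ℝ) - t - 1))))
      (Real.exp (lam * (((P.card : ℝ) - ((t:ℝ)+1) * m / N) / ((N:ℝ) - t - 1))))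
      (fun S _ hpre htS => by simp only [Zp_fiber_succ_mem hpre htS])
      (fun S _ hpre htS => by simp only [Zp_fiber_succ_not hpre htS])]
  have hz := mean_eq (k := (P.card : ℝ)) (t := (t:ℝ)) (m := (m:ℝ)) (N := (N:ℝ))
    hNt hNt1 hN0 (fiber_identity (by omega) hP hk)
  have := two_point_ge (lam := lam)
    (a := (((Om N m).filter (fun S => S ∩ Finset.range t = P ∧ t ∈ S)).card : ℝ))
    (b := (((Om N m).filter (fun S => S ∩ Finset.range t = P ∧ t ∉ S)).card : ℝ))
    (Nat.cast_nonneg _) (Nat.cast_nonneg _) hz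
  linarith [this]

lemma fiber_step_le (htN : t + 2 ≤ N) (hP : P ⊆ Finset.range t) (hk : P.card ≤ m)
    (hlam : |lam| * (1/((N:ℝ) - t - 1)) ≤ 1) :
    ∑ S ∈ (Om N m).filter (fun S => S ∩ Finset.range t = P), Real.exp (lam * Zp N m (t+1) S)
      ≤ (1 + lam^2 * (1/((N:ℝ) - t - 1))^2) *
          ∑ S ∈ (Om N m).filter (fun S => S ∩ Finset.range t = P),
            Real.exp (lam * Zp N m t S) := by
  classical
  obtain ⟨hN0, hNt, hNt1⟩ := fiber_setup (N := N) (t := t) htN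
  rw [sum_fiber_split (fun S => Real.exp (lam * Zp N m t S))
      (Real.exp (lam * (((P.card : ℝ) - t * m / N) / ((N:ℝ) - t))))
      (Real.exp (lam * (((P.card : ℝ) - t * m / N) / ((N:ℝ) - t))))
      (fun S _ hpre _ => by simp only [Zp_fiber_t hpre])
      (fun S _ hpre _ => by simp only [Zp_fiber_t hpre]),
    sum_fiber_split (fun S => Real.exp (lam * Zp N m (t+1) S))
      (Real.exp (lam * ((((P.card : ℝ) + 1) - ((t:ℝ)+1) * m / N) / ((N:ℝ) - t - 1))))
      (Real.exp (lam * (((P.card : ℝ) - ((t:ℝ)+1) * m / N) / ((N:ℝ) - t - 1))))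
      (fun S _ hpre htS => by simp only [Zp_fiber_succ_mem hpre htS])
      (fun S _ hpre htS => by simp only [Zp_fiber_succ_not hpre htS])]
  have hz := mean_eq (k := (P.card : ℝ)) (t := (t:ℝ)) (m := (m:ℝ)) (N := (N:ℝ))
    hNt hNt1 hN0 (fiber_identity (by omega) hP hk)
  have hxy : (((P.card : ℝ) + 1) - ((t:ℝ)+1) * m / N) / ((N:ℝ) - t - 1)
      = ((P.card : ℝ) - ((t:ℝ)+1) * m / N) / ((N:ℝ) - t - 1) + 1/((N:ℝ) - t - 1) := by
    rw [← add_div]; ring_nf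
  have hg : (0:ℝ) ≤ 1/((N:ℝ) - t - 1) := by positivity
  have := two_point_le (lam := lam)
    (a := (((Om N m).filter (fun S => S ∩ Finset.range t = P ∧ t ∈ S)).card : ℝ))
    (b := (((Om N m).filter (fun S => S ∩ Finset.range t = P ∧ t ∉ S)).card : ℝ))
    (Nat.cast_nonneg _) (Nat.cast_nonneg _) hz hxy hg hlam
  calc (((Om N m).filter (fun S => S ∩ Finset.range t = P ∧ t ∈ S)).card : ℝ) *
        Real.exp (lam * ((((P.card : ℝ) + 1) - ((t:ℝ)+1) * m / N) / ((N:ℝ) - t - 1)))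
        + (((Om N m).filter (fun S => S ∩ Finset.range t = P ∧ t ∉ S)).card : ℝ) *
        Real.exp (lam * (((P.card : ℝ) - ((t:ℝ)+1) * m / N) / ((N:ℝ) - t - 1)))
      ≤ (1 + lam^2 * (1/((N:ℝ) - t - 1))^2) *
        (((((Om N m).filter (fun S => S ∩ Finset.range t = P ∧ t ∈ S)).card : ℝ)
          + (((Om N m).filter (fun S => S ∩ Finset.range t = P ∧ t ∉ S)).card : ℝ))
          * Real.exp (lam * (((P.card : ℝ) - t * m / N) / ((N:ℝ) - t)))) := this
    _ = (1 + lam^2 * (1/((N:ℝ) - t - 1))^2) *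
        ((((Om N m).filter (fun S => S ∩ Finset.range t = P ∧ t ∈ S)).card : ℝ) *
          Real.exp (lam * (((P.card : ℝ) - t * m / N) / ((N:ℝ) - t)))
          + (((Om N m).filter (fun S => S ∩ Finset.range t = P ∧ t ∉ S)).card : ℝ) *
          Real.exp (lam * (((P.card : ℝ) - t * m / N) / ((N:ℝ) - t)))) := by ring

lemma step_ge (htN : t + 2 ≤ N) (A : Finset ℕ → Prop) [DecidablePred A]
    (hA : ∀ S T, S ∩ Finset.range t = T ∩ Finset.range t → A S → A T) :
    ∑ S ∈ (Om N m).filter A, Real.exp (lam * Zp N m t S)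
      ≤ ∑ S ∈ (Om N m).filter A, Real.exp (lam * Zp N m (t+1) S) := by
  classical
  have hmaps : ∀ S ∈ (Om N m).filter A, S ∩ Finset.range t ∈ (Finset.range t).powerset :=
    fun S _ => Finset.mem_powerset.mpr Finset.inter_subset_right
  rw [← Finset.sum_fiberwise_of_maps_to hmaps (fun S => Real.exp (lam * Zp N m t S)),
      ← Finset.sum_fiberwise_of_maps_to hmaps (fun S => Real.exp (lam * Zp N m (t+1) S))]
  apply Finset.sum_le_sum
  intro P hPmem
  rcases Finset.eq_empty_or_nonempty
      (((Om N m).filter A).filter (fun S => S ∩ Finset.range t = P)) with hemp | hne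
  · rw [hemp]; simp
  · obtain ⟨S₀, hS₀⟩ := hne
    simp only [Finset.mem_filter] at hS₀
    obtain ⟨⟨hS₀Om, hS₀A⟩, hS₀pre⟩ := hS₀
    have hFull : ((Om N m).filter A).filter (fun S => S ∩ Finset.range t = P)
        = (Om N m).filter (fun S => S ∩ Finset.range t = P) := by
      ext S
      simp only [Finset.mem_filter]
      constructor
      · rintro ⟨⟨h1, _⟩, h3⟩; exact ⟨h1, h3⟩
      · rintro ⟨h1, h3⟩
        exact ⟨⟨h1, hA S₀ S (by rw [hS₀pre, h3]) hS₀A⟩, h3⟩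
    rw [hFull]
    have hk : P.card ≤ m := by
      rw [← hS₀pre]
      calc (S₀ ∩ Finset.range t).card ≤ S₀.card := Finset.card_le_card Finset.inter_subset_left
        _ = m := (mem_Om.mp hS₀Om).2
    exact fiber_step_ge htN (hS₀pre ▸ Finset.inter_subset_right) hk

lemma step_le (htN : t + 2 ≤ N) (hlam : |lam| * (1/((N:ℝ) - t - 1)) ≤ 1) :
    ∑ S ∈ Om N m, Real.exp (lam * Zp N m (t+1) S)
      ≤ (1 + lam^2 * (1/((N:ℝ) - t - 1))^2) * ∑ S ∈ Om N m, Real.exp (lam * Zp N m t S) := by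
  classical
  have hmaps : ∀ S ∈ Om N m, S ∩ Finset.range t ∈ (Finset.range t).powerset :=
    fun S _ => Finset.mem_powerset.mpr Finset.inter_subset_right
  rw [← Finset.sum_fiberwise_of_maps_to hmaps (fun S => Real.exp (lam * Zp N m t S)),
      ← Finset.sum_fiberwise_of_maps_to hmaps (fun S => Real.exp (lam * Zp N m (t+1) S)),
      Finset.mul_sum]
  apply Finset.sum_le_sum
  intro P hPmem
  rcases Finset.eq_empty_or_nonempty
      ((Om N m).filter (fun S => S ∩ Finset.range t = P)) with hemp | hne
  · rw [hemp]; simp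
  · obtain ⟨S₀, hS₀⟩ := hne
    simp only [Finset.mem_filter] at hS₀
    obtain ⟨hS₀Om, hS₀pre⟩ := hS₀
    have hk : P.card ≤ m := by
      rw [← hS₀pre]
      calc (S₀ ∩ Finset.range t).card ≤ S₀.card := Finset.card_le_card Finset.inter_subset_left
        _ = m := (mem_Om.mp hS₀Om).2
    exact fiber_step_le htN (hS₀pre ▸ Finset.inter_subset_right) hk hlam

end Step


section Chain

variable {N m : ℕ} {lam : ℝ}

lemma prefix_mono {t0 t : ℕ} (h : t0 ≤ t) {S T : Finset ℕ}
    (hST : S ∩ Finset.range t = T ∩ Finset.range t) :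
    S ∩ Finset.range t0 = T ∩ Finset.range t0 := by
  have hr : Finset.range t ∩ Finset.range t0 = Finset.range t0 :=
    Finset.inter_eq_right.mpr (Finset.range_subset_range.mpr h)
  rw [← hr, ← Finset.inter_assoc, ← Finset.inter_assoc, hST]

lemma chain_ge (A : Finset ℕ → Prop) [DecidablePred A] {t0 : ℕ}
    (hA : ∀ S T, S ∩ Finset.range t0 = T ∩ Finset.range t0 → A S → A T) :
    ∀ t, t0 ≤ t → t + 1 ≤ N →
      ∑ S ∈ (Om N m).filter A, Real.exp (lam * Zp N m t0 S)
        ≤ ∑ S ∈ (Om N m).filter A, Real.exp (lam * Zp N m t S) := by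
  intro t
  induction t with
  | zero =>
    intro h1 _
    have h0 : t0 = 0 := Nat.le_zero.mp h1
    rw [h0]
  | succ t ih =>
    intro h1 h2
    rcases Nat.lt_or_ge t0 (t+1) with hlt | hge
    · have ht0t : t0 ≤ t := by omega
      have step := step_ge (N := N) (m := m) (lam := lam) (t := t) (by omega) A
        (fun S T hST hAS => hA S T (prefix_mono ht0t hST) hAS)
      exact le_trans (ih ht0t (by omega)) step
    · have h0 : t0 = t + 1 := by omega
      rw [h0]

lemma Zp_zero (S : Finset ℕ) : Zp N m 0 S = 0 := by
  unfold Zp Dev Lc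
  simp

lemma chain_le {n : ℕ} (hn2 : 2 * n ≤ N + 1) (hN2 : 2 ≤ N) (hlam0 : 0 ≤ lam)
    (hlamBound : lam * (4 / (N:ℝ)) ≤ 1) :
    ∀ t ≤ n, ∑ S ∈ Om N m, Real.exp (lam * Zp N m t S)
      ≤ (1 + lam^2 * (4 / (N:ℝ))^2)^t * ((Om N m).card : ℝ) := by
  intro t
  induction t with
  | zero =>
    intro _
    simp only [Zp_zero, mul_zero, Real.exp_zero, pow_zero, one_mul]
    rw [Finset.sum_const, nsmul_eq_mul, mul_one]
  | succ t ih =>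
    intro ht
    have hNR : (0:ℝ) < N := by
      have : (2:ℝ) ≤ (N:ℝ) := by exact_mod_cast hN2
      linarith
    have htN : t + 2 ≤ N := by omega
    have hnat : N ≤ 4 * (N - t - 1) := by omega
    have hgG : 1 / ((N:ℝ) - t - 1) ≤ 4 / (N:ℝ) := by
      have hc : (N:ℝ) ≤ 4 * ((N:ℝ) - t - 1) := by
        have e : ((N - t - 1 : ℕ) : ℝ) = (N:ℝ) - t - 1 := by
          rw [show N - t - 1 = N - (t+1) from by omega, Nat.cast_sub (by omega)]
          push_cast
          ring
        calc (N:ℝ) ≤ ((4 * (N - t - 1) : ℕ) : ℝ) := by exact_mod_cast hnat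
          _ = 4 * ((N - t - 1 : ℕ) : ℝ) := by push_cast; ring
          _ = 4 * ((N:ℝ) - t - 1) := by rw [e]
      have h2 : (0:ℝ) < (N:ℝ) - t - 1 := by
        have : ((t:ℝ)) + 2 ≤ (N:ℝ) := by exact_mod_cast htN
        linarith
      rw [div_le_div_iff₀ h2 hNR]
      linarith
    have hg0 : (0:ℝ) ≤ 1 / ((N:ℝ) - t - 1) := by
      have h2 : (0:ℝ) < (N:ℝ) - t - 1 := by
        have : ((t:ℝ)) + 2 ≤ (N:ℝ) := by exact_mod_cast htN
        linarith
      positivity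
    have hlamg : |lam| * (1 / ((N:ℝ) - t - 1)) ≤ 1 := by
      rw [abs_of_nonneg hlam0]
      calc lam * (1 / ((N:ℝ) - t - 1)) ≤ lam * (4 / (N:ℝ)) :=
            mul_le_mul_of_nonneg_left hgG hlam0
        _ ≤ 1 := hlamBound
    have step := step_le (N := N) (m := m) (lam := lam) (t := t) htN hlamg
    have hsum0 : (0:ℝ) ≤ ∑ S ∈ Om N m, Real.exp (lam * Zp N m t S) :=
      Finset.sum_nonneg (fun S _ => (Real.exp_pos _).le)
    have hfac : (1 + lam^2 * (1 / ((N:ℝ) - t - 1))^2) ≤ (1 + lam^2 * (4 / (N:ℝ))^2) := by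
      have : (1 / ((N:ℝ) - t - 1))^2 ≤ (4 / (N:ℝ))^2 := by
        apply pow_le_pow_left₀ hg0 hgG
      nlinarith [sq_nonneg lam]
    have hfac0 : (0:ℝ) ≤ 1 + lam^2 * (1 / ((N:ℝ) - t - 1))^2 := by positivity
    calc ∑ S ∈ Om N m, Real.exp (lam * Zp N m (t+1) S)
        ≤ (1 + lam^2 * (1 / ((N:ℝ) - t - 1))^2) * ∑ S ∈ Om N m, Real.exp (lam * Zp N m t S) :=
          step
      _ ≤ (1 + lam^2 * (4 / (N:ℝ))^2) * ((1 + lam^2 * (4 / (N:ℝ))^2)^t * ((Om N m).card : ℝ)) := by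
          apply mul_le_mul hfac (ih (by omega)) hsum0
          positivity
      _ = (1 + lam^2 * (4 / (N:ℝ))^2)^(t+1) * ((Om N m).card : ℝ) := by ring

end Chain


section Doob

lemma Zp_prefix {N m t0 s : ℕ} (hs : s ≤ t0) {S T : Finset ℕ}
    (hST : S ∩ Finset.range t0 = T ∩ Finset.range t0) : Zp N m s S = Zp N m s T := by
  unfold Zp Dev
  rw [Lc_prefix hs hST]

lemma doob_bound {N m : ℕ} {M : ℝ} (hN2 : 2 ≤ N) (hm : m ≤ N) (hM0 : 0 < M)
    (hMN : M ≤ (N:ℝ)) :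
    ((((Om N m).filter (fun S => ∃ t, t ≤ (N+1)/2 ∧ M ≤ Dev N m t S)).card : ℝ))
      ≤ Real.exp (-(M^2 / (64 * N))) * ((Om N m).card : ℝ) := by
  classical
  set n := (N+1)/2 with hn
  have hNR : (0:ℝ) < N := by
    have : (2:ℝ) ≤ (N:ℝ) := by exact_mod_cast hN2
    linarith
  set lam := M / 32 with hlamdef
  set a := M / (N:ℝ) with hadef
  have hlam0 : 0 ≤ lam := by positivity
  have hlamBound : lam * (4 / (N:ℝ)) ≤ 1 := by
    rw [hlamdef, div_mul_div_comm, div_le_one (by positivity)]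
    linarith
  have hn2 : 2 * n ≤ N + 1 := by omega
  have hnN : n + 1 ≤ N := by omega
  set A : ℕ → Finset ℕ → Prop :=
    fun t0 S => a ≤ Zp N m t0 S ∧ ∀ s, s < t0 → Zp N m s S < a with hA
  set Ev : ℕ → Finset (Finset ℕ) := fun t0 => (Om N m).filter (A t0) with hEv
  -- step 1 : bad set is inside the union of the Ev's
  have hsub : (Om N m).filter (fun S => ∃ t, t ≤ n ∧ M ≤ Dev N m t S)
      ⊆ (Finset.range (n+1)).biUnion Ev := by
    intro S hS
    rw [Finset.mem_filter] at hS
    obtain ⟨hOm, t, ht, hDev⟩ := hS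
    have hzex : ∃ s, s ≤ n ∧ a ≤ Zp N m s S := by
      refine ⟨t, ht, ?_⟩
      have h1 : (0:ℝ) < (N:ℝ) - t := by
        have h3 : ((t:ℝ)) ≤ (n:ℝ) := by exact_mod_cast ht
        have hnr : ((n:ℝ)) + 1 ≤ (N:ℝ) := by exact_mod_cast hnN
        linarith
      have h2 : (N:ℝ) - t ≤ (N:ℝ) := by
        have : (0:ℝ) ≤ (t:ℝ) := Nat.cast_nonneg t
        linarith
      unfold Zp
      rw [hadef]
      calc M / (N:ℝ) ≤ M / ((N:ℝ) - t) := div_le_div_of_nonneg_left hM0.le h1 h2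
        _ ≤ Dev N m t S / ((N:ℝ) - t) := (div_le_div_iff_of_pos_right h1).mpr hDev
    have hfind := Nat.find_spec hzex
    have ht1 : Nat.find hzex ≤ n := hfind.1
    rw [Finset.mem_biUnion]
    refine ⟨Nat.find hzex, Finset.mem_range.mpr (by omega), ?_⟩
    rw [hEv, Finset.mem_filter]
    refine ⟨hOm, hfind.2, ?_⟩
    intro s hs
    have hmin := Nat.find_min hzex hs
    push_neg at hmin
    exact hmin (by omega)
  -- step 2 : per-event bound
  have hstep2 : ∀ t0, t0 ≤ n →
      ((Ev t0).card : ℝ) * Real.exp (lam * a)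
        ≤ ∑ S ∈ Ev t0, Real.exp (lam * Zp N m n S) := by
    intro t0 ht0
    have h1 : ((Ev t0).card : ℝ) * Real.exp (lam * a)
        ≤ ∑ S ∈ Ev t0, Real.exp (lam * Zp N m t0 S) := by
      have := Finset.card_nsmul_le_sum (Ev t0)
        (fun S => Real.exp (lam * Zp N m t0 S)) (Real.exp (lam * a)) ?_
      · rwa [nsmul_eq_mul] at this
      · intro S hS
        rw [hEv, Finset.mem_filter] at hS
        exact Real.exp_le_exp.mpr (mul_le_mul_of_nonneg_left hS.2.1 hlam0)
    have h2 : ∑ S ∈ Ev t0, Real.exp (lam * Zp N m t0 S)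
        ≤ ∑ S ∈ Ev t0, Real.exp (lam * Zp N m n S) := by
      rw [hEv]
      apply chain_ge (A t0) ?_ n ht0 hnN
      intro S T hST hAS
      rw [hA]
      constructor
      · rw [← Zp_prefix le_rfl hST]
        exact hAS.1
      · intro s hs
        rw [← Zp_prefix (le_of_lt hs) hST]
        exact hAS.2 s hs
    linarith
  -- step 3 : disjointness
  have hdisj : (↑(Finset.range (n+1)) : Set ℕ).PairwiseDisjoint Ev := by
    intro i _ j _ hij
    show Disjoint (Ev i) (Ev j)
    rw [Finset.disjoint_left]
    intro S hSi hSj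
    rw [hEv, Finset.mem_filter] at hSi hSj
    rcases lt_or_gt_of_ne hij with h | h
    · exact absurd hSi.2.1 (not_le.mpr (hSj.2.2 i h))
    · exact absurd hSj.2.1 (not_le.mpr (hSi.2.2 j h))
  -- step 4 : mgf bound
  have hmgf : ∑ S ∈ Om N m, Real.exp (lam * Zp N m n S)
      ≤ Real.exp (16 * lam^2 / N) * ((Om N m).card : ℝ) := by
    have h1 := chain_le (N := N) (m := m) hn2 hN2 hlam0 hlamBound n le_rfl
    have h2 : (1 + lam^2 * (4 / (N:ℝ))^2)^n ≤ Real.exp (16 * lam^2 / N) := by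
      have e1 : (1 + lam^2 * (4 / (N:ℝ))^2) ≤ Real.exp (lam^2 * (4 / (N:ℝ))^2) := by
        have := Real.add_one_le_exp (lam^2 * (4 / (N:ℝ))^2)
        linarith
      have e2 : (1 + lam^2 * (4 / (N:ℝ))^2)^n ≤ Real.exp (lam^2 * (4 / (N:ℝ))^2)^n := by
        apply pow_le_pow_left₀ (by positivity) e1
      have e3 : Real.exp (lam^2 * (4 / (N:ℝ))^2)^n
          = Real.exp ((n:ℝ) * (lam^2 * (4 / (N:ℝ))^2)) := (Real.exp_nat_mul _ n).symm
      have e4 : (n:ℝ) * (lam^2 * (4 / (N:ℝ))^2) ≤ 16 * lam^2 / N := by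
        have hnr : (n:ℝ) ≤ (N:ℝ) := by exact_mod_cast (by omega : n ≤ N)
        have : (4 / (N:ℝ))^2 = 16 / ((N:ℝ)^2) := by
          rw [div_pow]; norm_num
        rw [this]
        rw [div_eq_mul_inv, div_eq_mul_inv]
        have hN2R : (0:ℝ) < (N:ℝ)^2 := by positivity
        have key : (n:ℝ) * (lam^2 * (16 * ((N:ℝ)^2)⁻¹)) = (n:ℝ) / (N:ℝ) * (16 * lam^2 * (N:ℝ)⁻¹) := by
          field_simp
        rw [key]
        have hq : (n:ℝ) / (N:ℝ) ≤ 1 := by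
          rw [div_le_one hNR]; exact hnr
        have hpos : (0:ℝ) ≤ 16 * lam^2 * (N:ℝ)⁻¹ := by positivity
        calc (n:ℝ) / (N:ℝ) * (16 * lam^2 * (N:ℝ)⁻¹) ≤ 1 * (16 * lam^2 * (N:ℝ)⁻¹) :=
              mul_le_mul_of_nonneg_right hq hpos
          _ = 16 * lam^2 * (N:ℝ)⁻¹ := by ring
      calc (1 + lam^2 * (4 / (N:ℝ))^2)^n ≤ Real.exp (lam^2 * (4 / (N:ℝ))^2)^n := e2
        _ = Real.exp ((n:ℝ) * (lam^2 * (4 / (N:ℝ))^2)) := e3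
        _ ≤ Real.exp (16 * lam^2 / N) := Real.exp_le_exp.mpr e4
    calc ∑ S ∈ Om N m, Real.exp (lam * Zp N m n S)
        ≤ (1 + lam^2 * (4 / (N:ℝ))^2)^n * ((Om N m).card : ℝ) := h1
      _ ≤ Real.exp (16 * lam^2 / N) * ((Om N m).card : ℝ) := by
          apply mul_le_mul_of_nonneg_right h2 (Nat.cast_nonneg _)
  -- assemble
  have hcard : (((Om N m).filter (fun S => ∃ t, t ≤ n ∧ M ≤ Dev N m t S)).card : ℝ)
      * Real.exp (lam * a) ≤ Real.exp (16 * lam^2 / N) * ((Om N m).card : ℝ) := by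
    have hc1 : (((Om N m).filter (fun S => ∃ t, t ≤ n ∧ M ≤ Dev N m t S)).card : ℝ)
        ≤ ∑ t0 ∈ Finset.range (n+1), ((Ev t0).card : ℝ) := by
      have := Finset.card_le_card hsub
      have h2 := Finset.card_biUnion_le (s := Finset.range (n+1)) (t := Ev)
      have h3 : (((Om N m).filter (fun S => ∃ t, t ≤ n ∧ M ≤ Dev N m t S)).card : ℕ)
          ≤ ∑ t0 ∈ Finset.range (n+1), (Ev t0).card := le_trans this h2
      exact_mod_cast h3
    have hc2 : ∑ t0 ∈ Finset.range (n+1), ((Ev t0).card : ℝ) * Real.exp (lam * a)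
        ≤ ∑ t0 ∈ Finset.range (n+1), ∑ S ∈ Ev t0, Real.exp (lam * Zp N m n S) := by
      apply Finset.sum_le_sum
      intro t0 ht0
      exact hstep2 t0 (by simp only [Finset.mem_range] at ht0; omega)
    have hc3 : ∑ t0 ∈ Finset.range (n+1), ∑ S ∈ Ev t0, Real.exp (lam * Zp N m n S)
        = ∑ S ∈ (Finset.range (n+1)).biUnion Ev, Real.exp (lam * Zp N m n S) :=
      (Finset.sum_biUnion hdisj).symm
    have hc4 : ∑ S ∈ (Finset.range (n+1)).biUnion Ev, Real.exp (lam * Zp N m n S)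
        ≤ ∑ S ∈ Om N m, Real.exp (lam * Zp N m n S) := by
      apply Finset.sum_le_sum_of_subset_of_nonneg
      · intro S hS
        rw [Finset.mem_biUnion] at hS
        obtain ⟨t0, _, hS⟩ := hS
        rw [hEv, Finset.mem_filter] at hS
        exact hS.1
      · intro S _ _
        exact (Real.exp_pos _).le
    have hexp0 : (0:ℝ) < Real.exp (lam * a) := Real.exp_pos _
    calc (((Om N m).filter (fun S => ∃ t, t ≤ n ∧ M ≤ Dev N m t S)).card : ℝ)
          * Real.exp (lam * a)
        ≤ (∑ t0 ∈ Finset.range (n+1), ((Ev t0).card : ℝ)) * Real.exp (lam * a) :=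
          mul_le_mul_of_nonneg_right hc1 hexp0.le
      _ = ∑ t0 ∈ Finset.range (n+1), ((Ev t0).card : ℝ) * Real.exp (lam * a) := by
          rw [Finset.sum_mul]
      _ ≤ ∑ t0 ∈ Finset.range (n+1), ∑ S ∈ Ev t0, Real.exp (lam * Zp N m n S) := hc2
      _ = ∑ S ∈ (Finset.range (n+1)).biUnion Ev, Real.exp (lam * Zp N m n S) := hc3
      _ ≤ ∑ S ∈ Om N m, Real.exp (lam * Zp N m n S) := hc4
      _ ≤ Real.exp (16 * lam^2 / N) * ((Om N m).card : ℝ) := hmgf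
  -- final arithmetic
  have hfin : Real.exp (16 * lam^2 / N) * Real.exp (-(lam * a)) = Real.exp (-(M^2 / (64 * N))) := by
    rw [← Real.exp_add]
    congr 1
    rw [hlamdef, hadef]
    field_simp
    ring
  have hexp0 : (0:ℝ) < Real.exp (lam * a) := Real.exp_pos _
  have := mul_le_mul_of_nonneg_right hcard (Real.exp_pos (-(lam * a))).le
  rw [mul_assoc, ← Real.exp_add] at this
  rw [add_neg_cancel, Real.exp_zero, mul_one] at this
  calc (((Om N m).filter (fun S => ∃ t, t ≤ n ∧ M ≤ Dev N m t S)).card : ℝ)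
      ≤ Real.exp (16 * lam^2 / N) * ((Om N m).card : ℝ) * Real.exp (-(lam * a)) := this
    _ = Real.exp (16 * lam^2 / N) * Real.exp (-(lam * a)) * ((Om N m).card : ℝ) := by ring
    _ = Real.exp (-(M^2 / (64 * N))) * ((Om N m).card : ℝ) := by rw [hfin]

end Doob


section Symm

def rmap (N : ℕ) (S : Finset ℕ) : Finset ℕ := S.image (fun i => N - 1 - i)

def cmap (N : ℕ) (S : Finset ℕ) : Finset ℕ := Finset.range N \ S

variable {N m t : ℕ} {S T : Finset ℕ}

lemma rmap_injOn (hS : S ⊆ Finset.range N) : Set.InjOn (fun i => N - 1 - i) ↑S := by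
  intro i hi j hj hij
  have hi' := Finset.mem_range.mp (hS hi)
  have hj' := Finset.mem_range.mp (hS hj)
  simp only at hij
  omega

lemma rmap_mem (hS : S ∈ Om N m) : rmap N S ∈ Om N m := by
  obtain ⟨hsub, hcard⟩ := mem_Om.mp hS
  rw [mem_Om]
  constructor
  · intro x hx
    rw [rmap, Finset.mem_image] at hx
    obtain ⟨i, hi, rfl⟩ := hx
    have := Finset.mem_range.mp (hsub hi)
    rw [Finset.mem_range]
    omega
  · rw [rmap, Finset.card_image_of_injOn (rmap_injOn hsub), hcard]

lemma rmap_rmap (hS : S ⊆ Finset.range N) : rmap N (rmap N S) = S := by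
  ext x
  simp only [rmap, Finset.mem_image]
  constructor
  · rintro ⟨y, ⟨i, hiS, rfl⟩, rfl⟩
    have := Finset.mem_range.mp (hS hiS)
    have hx : N - 1 - (N - 1 - i) = i := by omega
    rwa [hx]
  · intro hx
    have hxN := Finset.mem_range.mp (hS hx)
    exact ⟨N - 1 - x, ⟨x, hx, rfl⟩, by omega⟩

lemma cmap_mem (hS : S ∈ Om N m) : cmap N S ∈ Om N (N - m) := by
  obtain ⟨hsub, hcard⟩ := mem_Om.mp hS
  rw [mem_Om, cmap]
  exact ⟨Finset.sdiff_subset, by rw [Finset.card_sdiff_of_subset hsub, hcard, Finset.card_range]⟩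

lemma cmap_cmap (hS : S ⊆ Finset.range N) : cmap N (cmap N S) = S := by
  ext x
  simp only [cmap, Finset.mem_sdiff, Finset.mem_range, not_and, not_not]
  constructor
  · rintro ⟨h1, h2⟩
    exact h2 h1
  · intro hx
    exact ⟨Finset.mem_range.mp (hS hx), fun _ => hx⟩

lemma Lc_rmap (hS : S ∈ Om N m) (ht : t ≤ N) :
    Lc t (rmap N S) + Lc (N - t) S = m := by
  obtain ⟨hsub, hcard⟩ := mem_Om.mp hS
  have key : rmap N S ∩ Finset.range t
      = (S \ Finset.range (N - t)).image (fun i => N - 1 - i) := by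
    ext y
    simp only [Finset.mem_inter, Finset.mem_image, Finset.mem_sdiff, Finset.mem_range, rmap]
    constructor
    · rintro ⟨⟨i, hiS, rfl⟩, hyt⟩
      have hiN := Finset.mem_range.mp (hsub hiS)
      exact ⟨i, ⟨hiS, by omega⟩, rfl⟩
    · rintro ⟨i, ⟨hiS, hge⟩, rfl⟩
      have hiN := Finset.mem_range.mp (hsub hiS)
      exact ⟨⟨i, hiS, rfl⟩, by omega⟩
  have hLc : Lc t (rmap N S) = (S \ Finset.range (N - t)).card := by
    unfold Lc
    rw [key, Finset.card_image_of_injOn]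
    intro i hi j hj hij
    have hi' := Finset.mem_range.mp (hsub (Finset.mem_sdiff.mp hi).1)
    have hj' := Finset.mem_range.mp (hsub (Finset.mem_sdiff.mp hj).1)
    simp only at hij
    omega
  have hfin := Finset.card_inter_add_card_sdiff S (Finset.range (N - t))
  rw [hcard] at hfin
  rw [hLc]
  unfold Lc
  omega

lemma Dev_rmap (hS : S ∈ Om N m) (ht : t ≤ N) (hN : 0 < N) :
    Dev N m t (rmap N S) = - Dev N m (N - t) S := by
  have hkey := Lc_rmap hS ht
  have hLcle : Lc (N - t) S ≤ m := by
    have := Lc_le_card (N - t) S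
    rw [(mem_Om.mp hS).2] at this
    exact this
  have hc1 : (Lc t (rmap N S) : ℝ) = (m : ℝ) - (Lc (N - t) S : ℝ) := by
    have : (Lc t (rmap N S) + Lc (N - t) S : ℕ) = m := hkey
    have := congrArg (Nat.cast (R := ℝ)) this
    push_cast at this
    linarith
  have hc2 : ((N - t : ℕ) : ℝ) = (N : ℝ) - (t : ℝ) := Nat.cast_sub ht
  have hNR : (0:ℝ) < N := by exact_mod_cast hN
  unfold Dev
  rw [hc1, hc2]
  field_simp
  ring

lemma Lc_cmap (ht : t ≤ N) : Lc t (cmap N S) + Lc t S = t := by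
  have key : cmap N S ∩ Finset.range t = Finset.range t \ S := by
    ext x
    simp only [cmap, Finset.mem_inter, Finset.mem_sdiff, Finset.mem_range]
    constructor
    · rintro ⟨⟨h1, h2⟩, h3⟩; exact ⟨h3, h2⟩
    · rintro ⟨h1, h2⟩; exact ⟨⟨by omega, h2⟩, h1⟩
  unfold Lc
  rw [key]
  have h1 := Finset.card_inter_add_card_sdiff (Finset.range t) S
  rw [Finset.card_range] at h1
  rw [Finset.inter_comm]
  omega

lemma Dev_cmap (ht : t ≤ N) (hm : m ≤ N) (hN : 0 < N) :
    Dev N (N - m) t (cmap N S) = - Dev N m t S := by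
  have hkey := Lc_cmap (S := S) (N := N) ht
  have hc1 : (Lc t (cmap N S) : ℝ) = (t : ℝ) - (Lc t S : ℝ) := by
    have := congrArg (Nat.cast (R := ℝ)) hkey
    push_cast at this
    linarith
  have hc2 : ((N - m : ℕ) : ℝ) = (N : ℝ) - (m : ℝ) := Nat.cast_sub hm
  have hNR : (0:ℝ) < N := by exact_mod_cast hN
  unfold Dev
  rw [hc1, hc2]
  field_simp
  ring

end Symm

section BadAll

lemma bad_all_bound {N m : ℕ} {M : ℝ} (hN2 : 2 ≤ N) (hm : m ≤ N) (hM0 : 0 < M)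
    (hMN : M ≤ (N:ℝ)) :
    (((Om N m).filter (fun S => ∃ t, t ≤ N ∧ M ≤ |Dev N m t S|)).card : ℝ)
      ≤ 4 * Real.exp (-(M^2 / (64 * N))) * ((Om N m).card : ℝ) := by
  classical
  set n := (N+1)/2 with hn
  have hN0 : 0 < N := by omega
  set B1 := (Om N m).filter (fun S => ∃ t, t ≤ n ∧ M ≤ Dev N m t S) with hB1
  set B2 := (Om N m).filter (fun S => ∃ t, t ≤ n ∧ M ≤ -Dev N m t S) with hB2
  set B3 := (Om N m).filter (fun S => ∃ t, t ≤ N ∧ N ≤ t + n ∧ M ≤ Dev N m t S) with hB3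
  set B4 := (Om N m).filter (fun S => ∃ t, t ≤ N ∧ N ≤ t + n ∧ M ≤ -Dev N m t S) with hB4
  have hcover : (Om N m).filter (fun S => ∃ t, t ≤ N ∧ M ≤ |Dev N m t S|)
      ⊆ B1 ∪ B2 ∪ B3 ∪ B4 := by
    intro S hS
    rw [Finset.mem_filter] at hS
    obtain ⟨hOm, t, ht, habs⟩ := hS
    simp only [Finset.mem_union, hB1, hB2, hB3, hB4, Finset.mem_filter]
    rcases le_abs.mp habs with hpos | hneg
    · rcases Nat.le_or_le t n with h | h
      · exact Or.inl (Or.inl (Or.inl ⟨hOm, t, h, hpos⟩))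
      · exact Or.inl (Or.inr ⟨hOm, t, ht, by omega, hpos⟩)
    · rcases Nat.le_or_le t n with h | h
      · exact Or.inl (Or.inl (Or.inr ⟨hOm, t, h, hneg⟩))
      · exact Or.inr ⟨hOm, t, ht, by omega, hneg⟩
  -- B1 bound
  have hB1bound : ((B1.card : ℝ)) ≤ Real.exp (-(M^2 / (64 * N))) * ((Om N m).card : ℝ) :=
    doob_bound hN2 hm hM0 hMN
  -- B2 : inject into the (N-m) upper set via cmap
  have hB2bound : ((B2.card : ℝ)) ≤ Real.exp (-(M^2 / (64 * N))) * ((Om N m).card : ℝ) := by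
    have hinj : B2.card ≤ ((Om N (N - m)).filter
        (fun S => ∃ t, t ≤ n ∧ M ≤ Dev N (N - m) t S)).card := by
      apply Finset.card_le_card_of_injOn (cmap N)
      · intro S hS
        rw [hB2, Finset.mem_coe, Finset.mem_filter] at hS
        obtain ⟨hOm, t, ht, hdev⟩ := hS
        rw [Finset.mem_coe, Finset.mem_filter]
        refine ⟨cmap_mem hOm, t, ht, ?_⟩
        rw [Dev_cmap (by omega) hm hN0]
        exact hdev
      · intro S hSmem T hTmem hST
        rw [hB2, Finset.coe_filter, Set.mem_setOf_eq] at hSmem hTmem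
        have h1 : S ⊆ Finset.range N := (mem_Om.mp hSmem.1).1
        have h2 : T ⊆ Finset.range N := (mem_Om.mp hTmem.1).1
        rw [← cmap_cmap h1, hST, cmap_cmap h2]
    have hOmeq : (Om N (N - m)).card = (Om N m).card := by
      rw [Om, Om, Finset.card_powersetCard, Finset.card_powersetCard, Finset.card_range,
        Nat.choose_symm hm]
    have := doob_bound (m := N - m) hN2 (by omega) hM0 hMN
    rw [hOmeq] at this
    calc ((B2.card : ℝ)) ≤ (((Om N (N - m)).filter
          (fun S => ∃ t, t ≤ n ∧ M ≤ Dev N (N - m) t S)).card : ℝ) := by exact_mod_cast hinj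
      _ ≤ Real.exp (-(M^2 / (64 * N))) * ((Om N m).card : ℝ) := this
  -- B3 : inject into B2 via rmap
  have hB3card : B3.card ≤ B2.card := by
    apply Finset.card_le_card_of_injOn (rmap N)
    · intro S hS
      rw [hB3, Finset.mem_coe, Finset.mem_filter] at hS
      obtain ⟨hOm, t, ht, htn, hdev⟩ := hS
      rw [hB2, Finset.mem_coe, Finset.mem_filter]
      refine ⟨rmap_mem hOm, N - t, by omega, ?_⟩
      rw [Dev_rmap hOm (by omega) hN0]
      rw [show N - (N - t) = t from by omega]
      linarith [hdev]
    · intro S hSmem T hTmem hST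
      rw [hB3, Finset.coe_filter, Set.mem_setOf_eq] at hSmem hTmem
      have h1 : S ⊆ Finset.range N := (mem_Om.mp hSmem.1).1
      have h2 : T ⊆ Finset.range N := (mem_Om.mp hTmem.1).1
      rw [← rmap_rmap h1, hST, rmap_rmap h2]
  -- B4 : inject into B1 via rmap
  have hB4card : B4.card ≤ B1.card := by
    apply Finset.card_le_card_of_injOn (rmap N)
    · intro S hS
      rw [hB4, Finset.mem_coe, Finset.mem_filter] at hS
      obtain ⟨hOm, t, ht, htn, hdev⟩ := hS
      rw [hB1, Finset.mem_coe, Finset.mem_filter]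
      refine ⟨rmap_mem hOm, N - t, by omega, ?_⟩
      rw [Dev_rmap hOm (by omega) hN0]
      rw [show N - (N - t) = t from by omega]
      linarith [hdev]
    · intro S hSmem T hTmem hST
      rw [hB4, Finset.coe_filter, Set.mem_setOf_eq] at hSmem hTmem
      have h1 : S ⊆ Finset.range N := (mem_Om.mp hSmem.1).1
      have h2 : T ⊆ Finset.range N := (mem_Om.mp hTmem.1).1
      rw [← rmap_rmap h1, hST, rmap_rmap h2]
  have hcards : ((Om N m).filter (fun S => ∃ t, t ≤ N ∧ M ≤ |Dev N m t S|)).card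
      ≤ B1.card + B2.card + B3.card + B4.card := by
    calc ((Om N m).filter (fun S => ∃ t, t ≤ N ∧ M ≤ |Dev N m t S|)).card
        ≤ (B1 ∪ B2 ∪ B3 ∪ B4).card := Finset.card_le_card hcover
      _ ≤ (B1 ∪ B2 ∪ B3).card + B4.card := Finset.card_union_le _ _
      _ ≤ (B1 ∪ B2).card + B3.card + B4.card := by
          have := Finset.card_union_le (B1 ∪ B2) B3
          omega
      _ ≤ B1.card + B2.card + B3.card + B4.card := by
          have := Finset.card_union_le B1 B2
          omega
  have hcardsR : (((Om N m).filter (fun S => ∃ t, t ≤ N ∧ M ≤ |Dev N m t S|)).card : ℝ)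
      ≤ (B1.card : ℝ) + B2.card + B3.card + B4.card := by exact_mod_cast hcards
  have h3R : (B3.card : ℝ) ≤ (B2.card : ℝ) := by exact_mod_cast hB3card
  have h4R : (B4.card : ℝ) ≤ (B1.card : ℝ) := by exact_mod_cast hB4card
  calc (((Om N m).filter (fun S => ∃ t, t ≤ N ∧ M ≤ |Dev N m t S|)).card : ℝ)
      ≤ (B1.card : ℝ) + B2.card + B3.card + B4.card := hcardsR
    _ ≤ (B1.card : ℝ) + B2.card + B2.card + B1.card := by linarith
    _ ≤ 4 * Real.exp (-(M^2 / (64 * N))) * ((Om N m).card : ℝ) := by linarith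

end BadAll


section Transfer

open scoped Classical

variable {N m : ℕ}

def Phi (N : ℕ) (S : Finset ℕ) : Fin (N+1) → ℤ := fun j => (Lc (j : ℕ) S : ℤ)

def goodPred (N m : ℕ) (M : ℝ) (S : Finset ℕ) : Prop := ∀ t, t ≤ N → |Dev N m t S| ≤ M

lemma Phi_mem (hS : S ∈ Om N m) : Phi N S ∈ pathSet N 0 (m : ℤ) := by
  refine ⟨?_, ?_, ?_⟩
  · intro j
    simp only [Phi, Fin.val_succ, Fin.coe_castSucc]
    rw [Lc_succ]
    by_cases hj : (j : ℕ) ∈ S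
    · right; rw [if_pos hj]; push_cast; ring
    · left; rw [if_neg hj]; push_cast; ring
  · show (Lc ((0 : Fin (N+1)) : ℕ) S : ℤ) = 0
    simp [Lc]
  · show (Lc ((Fin.last N : Fin (N+1)) : ℕ) S : ℤ) = (m : ℤ)
    rw [Fin.val_last, Lc_full hS]

lemma Phi_injOn : Set.InjOn (Phi N) ↑(Om N m) := by
  intro S hS T hT h
  rw [Finset.mem_coe] at hS hT
  have hLc : ∀ t, t ≤ N → Lc t S = Lc t T := by
    intro t ht
    have := congrFun h ⟨t, Nat.lt_succ_of_le ht⟩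
    simp only [Phi, Nat.cast_inj] at this
    exact_mod_cast this
  ext i
  by_cases hi : i < N
  · have h1 := hLc i (by omega)
    have h2 := hLc (i+1) (by omega)
    have key : ∀ U : Finset ℕ, (i ∈ U ↔ Lc (i+1) U = Lc i U + 1) := by
      intro U
      rw [Lc_succ]
      by_cases hU : i ∈ U <;> simp [hU]
    rw [key S, key T, h1, h2]
  · constructor
    · intro hmem
      exact absurd (Finset.mem_range.mp ((mem_Om.mp hS).1 hmem)) hi
    · intro hmem
      exact absurd (Finset.mem_range.mp ((mem_Om.mp hT).1 hmem)) hi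

lemma Phi_surj (hm : m ≤ N) {L : Fin (N+1) → ℤ} (hL : L ∈ pathSet N 0 (m : ℤ)) :
    ∃ S ∈ Om N m, Phi N S = L := by
  obtain ⟨hpath, h0, hlast⟩ := hL
  set S := Finset.image Fin.val
    (Finset.univ.filter (fun j : Fin N => L j.succ = L j.castSucc + 1)) with hSdef
  have hSsub : S ⊆ Finset.range N := by
    intro x hx
    rw [hSdef, Finset.mem_image] at hx
    obtain ⟨j, _, rfl⟩ := hx
    exact Finset.mem_range.mpr j.isLt
  have hmem : ∀ j : Fin N, ((j : ℕ) ∈ S ↔ L j.succ = L j.castSucc + 1) := by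
    intro j
    rw [hSdef, Finset.mem_image]
    constructor
    · rintro ⟨j', hj', hval⟩
      rw [Finset.mem_filter] at hj'
      have hjj : j' = j := Fin.val_injective hval
      rw [← hjj]
      exact hj'.2
    · intro hj
      exact ⟨j, Finset.mem_filter.mpr ⟨Finset.mem_univ _, hj⟩, rfl⟩
  have claim : ∀ t, ∀ ht : t ≤ N, (Lc t S : ℤ) = L ⟨t, Nat.lt_succ_of_le ht⟩ := by
    intro t
    induction t with
    | zero =>
      intro ht
      have he : (⟨0, Nat.lt_succ_of_le ht⟩ : Fin (N+1)) = 0 := by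
        apply Fin.ext; simp
      rw [he, h0]
      simp [Lc]
    | succ t ih =>
      intro ht
      have htN : t < N := by omega
      set jt : Fin N := ⟨t, htN⟩ with hjt
      have hsucc : (jt.succ : Fin (N+1)) = ⟨t+1, Nat.lt_succ_of_le ht⟩ := by
        apply Fin.ext; simp [hjt]
      have hcast : (jt.castSucc : Fin (N+1)) = ⟨t, Nat.lt_succ_of_le (by omega)⟩ := by
        apply Fin.ext; simp [hjt]
      have hLcs := Lc_succ t S
      rcases hpath jt with hcase | hcase
      · have htS : t ∉ S := by
          intro hmem'
          have h5 := (hmem jt).mp hmem'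
          rw [hcase] at h5
          omega
        rw [hLcs, if_neg htS]
        calc ((Lc t S + 0 : ℕ) : ℤ) = (Lc t S : ℤ) := by push_cast; ring
          _ = L ⟨t, Nat.lt_succ_of_le (by omega)⟩ := ih (by omega)
          _ = L jt.castSucc := by rw [hcast]
          _ = L jt.succ := hcase.symm
          _ = L ⟨t+1, Nat.lt_succ_of_le ht⟩ := by rw [hsucc]
      · have htS : t ∈ S := (hmem jt).mpr hcase
        rw [hLcs, if_pos htS]
        calc ((Lc t S + 1 : ℕ) : ℤ) = (Lc t S : ℤ) + 1 := by push_cast; ring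
          _ = L ⟨t, Nat.lt_succ_of_le (by omega)⟩ + 1 := by rw [ih (by omega)]
          _ = L jt.castSucc + 1 := by rw [hcast]
          _ = L jt.succ := hcase.symm
          _ = L ⟨t+1, Nat.lt_succ_of_le ht⟩ := by rw [hsucc]
  have hcardS : S.card = m := by
    have h1 : (Lc N S : ℤ) = L ⟨N, Nat.lt_succ_of_le le_rfl⟩ := claim N le_rfl
    have h2 : L ⟨N, Nat.lt_succ_of_le le_rfl⟩ = (m : ℤ) := by
      rw [← hlast]
      congr 1
    have h3 : Lc N S = S.card := by
      unfold Lc; rw [Finset.inter_eq_left.mpr hSsub]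
    have h4 : (S.card : ℤ) = (m : ℤ) := by rw [← h3, h1, h2]
    exact_mod_cast h4
  refine ⟨S, mem_Om.mpr ⟨hSsub, hcardS⟩, ?_⟩
  funext j
  show (Lc (j : ℕ) S : ℤ) = L j
  rw [claim (j : ℕ) (by omega)]

lemma event_transfer {S : Finset ℕ} (M : ℝ) :
    (Phi N S ∈ {L : Fin (N+1) → ℤ |
        ∀ j : Fin (N+1), |((L j : ℤ) : ℝ) - (m : ℝ) * ((j : ℕ) : ℝ) / (N : ℝ)| ≤ M})
      ↔ goodPred N m M S := by
  simp only [Set.mem_setOf_eq, Phi]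
  constructor
  · intro h t ht
    have h2 := h ⟨t, Nat.lt_succ_of_le ht⟩
    unfold Dev
    have e : ((Lc t S : ℤ) : ℝ) - (m : ℝ) * (t : ℝ) / N = (Lc t S : ℝ) - t * m / N := by
      push_cast; ring
    rw [show ((⟨t, Nat.lt_succ_of_le ht⟩ : Fin (N+1)) : ℕ) = t from rfl] at h2
    rw [e] at h2
    exact h2
  · intro h j
    have h2 := h (j : ℕ) (by omega)
    unfold Dev at h2
    have e : ((Lc (j : ℕ) S : ℤ) : ℝ) - (m : ℝ) * ((j : ℕ) : ℝ) / N
        = (Lc (j : ℕ) S : ℝ) - (j : ℕ) * m / N := by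
      push_cast; ring
    rw [e]
    exact h2

lemma pathSet_eq (hm : m ≤ N) : pathSet N 0 (m : ℤ) = Phi N '' ↑(Om N m) := by
  ext L
  constructor
  · intro hL
    obtain ⟨S, hS, hPhi⟩ := Phi_surj hm hL
    exact ⟨S, hS, hPhi⟩
  · rintro ⟨S, hS, rfl⟩
    exact Phi_mem (Finset.mem_coe.mp hS)

lemma inter_eq (hm : m ≤ N) (M : ℝ) :
    pathSet N 0 (m : ℤ) ∩ {L : Fin (N+1) → ℤ |
        ∀ j : Fin (N+1), |((L j : ℤ) : ℝ) - (m : ℝ) * ((j : ℕ) : ℝ) / (N : ℝ)| ≤ M}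
      = Phi N '' ↑((Om N m).filter (goodPred N m M)) := by
  ext L
  constructor
  · rintro ⟨hL, hA⟩
    obtain ⟨S, hS, rfl⟩ := Phi_surj hm hL
    refine ⟨S, ?_, rfl⟩
    rw [Finset.mem_coe, Finset.mem_filter]
    exact ⟨hS, (event_transfer M).mp hA⟩
  · rintro ⟨S, hS, rfl⟩
    rw [Finset.mem_coe, Finset.mem_filter] at hS
    exact ⟨Phi_mem hS.1, (event_transfer M).mpr hS.2⟩

lemma dev_bound {t : ℕ} {S : Finset ℕ} (hS : S ∈ Om N m) (hm : m ≤ N) (ht : t ≤ N)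
    (hN : 0 < N) : |Dev N m t S| ≤ (N : ℝ) := by
  unfold Dev
  have hNR : (0:ℝ) < N := by exact_mod_cast hN
  have h1 : (0:ℝ) ≤ (Lc t S : ℝ) := Nat.cast_nonneg _
  have h2 : (Lc t S : ℝ) ≤ N := by
    have := le_trans (Lc_le_card t S) (le_trans (le_of_eq (mem_Om.mp hS).2) hm)
    exact_mod_cast this
  have h3 : (0:ℝ) ≤ (t : ℝ) * m / N := by positivity
  have h4 : (t : ℝ) * m / N ≤ N := by
    rw [div_le_iff₀ hNR]
    have ha : (t:ℝ) ≤ N := by exact_mod_cast ht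
    have hb : (m:ℝ) ≤ N := by exact_mod_cast hm
    nlinarith [Nat.cast_nonneg (α := ℝ) t, Nat.cast_nonneg (α := ℝ) m]
  rw [abs_le]
  constructor <;> linarith

end Transfer

end BPaux

open BPaux in
/-- Lemma 3.7: supremum fluctuation bound for Bernoulli random walk bridges. -/
theorem stmt18 :
    ∃ C c : ℝ, 0 < C ∧ 0 < c ∧
      ∀ N : ℕ, 1 ≤ N → ∀ m : ℕ, m ≤ N → ∀ M : ℝ, 0 < M →
        unifProb (pathSet N 0 (m : ℤ))
            {L | ∀ j : Fin (N+1), |(L j : ℝ) - (m : ℝ) * (j : ℕ) / (N : ℝ)| ≤ M} ≥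
          1 - C * Real.exp (-(c * M ^ 2 / (N : ℝ))) := by
  classical
  refine ⟨5, 1/64, by norm_num, by norm_num, ?_⟩
  intro N hN m hm M hM
  have hN0 : 0 < N := hN
  have hOmpos : 0 < (Om N m).card := by
    rw [Om, Finset.card_powersetCard, Finset.card_range]
    exact Nat.choose_pos hm
  have hOmposR : (0:ℝ) < ((Om N m).card : ℝ) := by exact_mod_cast hOmpos
  have h1 : (pathSet N 0 (m : ℤ)).ncard = (Om N m).card := by
    rw [pathSet_eq hm, Set.ncard_image_of_injOn Phi_injOn, Set.ncard_coe_finset]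
  have h2 : (pathSet N 0 (m : ℤ) ∩ {L : Fin (N+1) → ℤ |
        ∀ j : Fin (N+1), |(L j : ℝ) - (m : ℝ) * ((j : ℕ) : ℝ) / (N : ℝ)| ≤ M}).ncard
      = ((Om N m).filter (goodPred N m M)).card := by
    rw [inter_eq hm M, Set.ncard_image_of_injOn
      (Phi_injOn.mono (Finset.coe_subset.mpr (Finset.filter_subset _ _))),
      Set.ncard_coe_finset]
  rw [unifProb, h1, h2]
  have hexpal : Real.exp (-(M^2/(64*(N:ℝ)))) = Real.exp (-(1/64 * M^2 / (N:ℝ))) := by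
    congr 1; ring
  have hexppos : (0:ℝ) < Real.exp (-(1/64 * M^2 / (N:ℝ))) := Real.exp_pos _
  by_cases htriv : ∀ S ∈ Om N m, goodPred N m M S
  · rw [Finset.filter_true_of_mem htriv, div_self (ne_of_gt hOmposR)]
    nlinarith [hexppos]
  · have hMN : M < N := by
      by_contra hge
      push_neg at hge
      apply htriv
      intro S hS t ht
      exact le_trans (dev_bound hS hm ht hN0) hge
    have hN2 : 2 ≤ N := by
      by_contra hlt
      push_neg at hlt
      have hNeq : N = 1 := Nat.le_antisymm (Nat.lt_succ_iff.mp hlt) hN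
      apply htriv
      subst hNeq
      intro S hS t ht
      have ht01 : t = 0 ∨ t = 1 := Nat.le_one_iff_eq_zero_or_eq_one.mp ht
      rcases ht01 with rfl | rfl
      · have hz : Dev 1 m 0 S = 0 := by
          unfold Dev Lc
          simp
        rw [hz, abs_zero]
        exact hM.le
      · have hz : Dev 1 m 1 S = 0 := by
          unfold Dev
          rw [Lc_full hS]
          norm_num
        rw [hz, abs_zero]
        exact hM.le
    have hbad := bad_all_bound hN2 hm hM hMN.le
    have hsplit := Finset.card_filter_add_card_filter_not
      (s := Om N m) (p := goodPred N m M)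
    have hsubbad : (Om N m).filter (fun S => ¬ goodPred N m M S)
        ⊆ (Om N m).filter (fun S => ∃ t, t ≤ N ∧ M ≤ |Dev N m t S|) := by
      apply Finset.monotone_filter_right
      intro S _ hnot
      rw [goodPred] at hnot
      push_neg at hnot
      obtain ⟨t, ht, hdev⟩ := hnot
      exact ⟨t, ht, hdev.le⟩
    have hcardle : ((Om N m).filter (fun S => ¬ goodPred N m M S)).card
        ≤ ((Om N m).filter (fun S => ∃ t, t ≤ N ∧ M ≤ |Dev N m t S|)).card :=
      Finset.card_le_card hsubbad
    have hgood : (((Om N m).filter (goodPred N m M)).card : ℝ)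
        ≥ ((Om N m).card : ℝ)
          - 4 * Real.exp (-(M^2/(64*(N:ℝ)))) * ((Om N m).card : ℝ) := by
      have e1 : (((Om N m).filter (goodPred N m M)).card : ℝ)
          = ((Om N m).card : ℝ)
            - (((Om N m).filter (fun S => ¬ goodPred N m M S)).card : ℝ) := by
        have hc := congrArg (Nat.cast (R := ℝ)) hsplit
        push_cast at hc
        linarith
      have e2 : (((Om N m).filter (fun S => ¬ goodPred N m M S)).card : ℝ)
          ≤ 4 * Real.exp (-(M^2/(64*(N:ℝ)))) * ((Om N m).card : ℝ) := by
        calc (((Om N m).filter (fun S => ¬ goodPred N m M S)).card : ℝ)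
            ≤ (((Om N m).filter (fun S => ∃ t, t ≤ N ∧ M ≤ |Dev N m t S|)).card : ℝ) := by
              exact_mod_cast hcardle
          _ ≤ 4 * Real.exp (-(M^2/(64*(N:ℝ)))) * ((Om N m).card : ℝ) := hbad
      linarith
    rw [ge_iff_le, ← hexpal, le_div_iff₀ hOmposR]
    have hEpos : (0:ℝ) < Real.exp (-(M^2/(64*(N:ℝ)))) := Real.exp_pos _
    have hEO : (0:ℝ) ≤ Real.exp (-(M^2/(64*(N:ℝ)))) * ((Om N m).card : ℝ) :=
      mul_nonneg hEpos.le hOmposR.le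
    nlinarith [hgood, hEO]
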